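/- For every word w ∈ {0,1}ⁿ with r(w) ∈ R, the swap map Q interchanges the images of the exceptional sets of the two towers: Q(ψ(F_w)) = ψ(F̄_{w̄}) and Q(ψ(F̄_{w̄})) = ψ(F_w). -/

import Mathlib

open MeasureTheory Set Filter
open scoped Classical ENNReal

namespace RandomBeta

noncomputable section

/-- The left shift on `{0,1}^ℕ`. -/
def shift (ω : ℕ → Bool) : ℕ → Bool := fun n => ω (n + 1)

/-- The digit complementation `ω̄ᵢ = 1 - ωᵢ`. -/
def compSeq (ω : ℕ → Bool) : ℕ → Bool := fun n => !(ω n)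

/-- The interval `I_β = [0, 1/(β-1)]`. -/
def Ibeta (β : ℝ) : Set ℝ := Set.Icc 0 (1 / (β - 1))

/-- `L = [0, 1/β)`. -/
def Lset (β : ℝ) : Set ℝ := Set.Ico 0 (1 / β)

/-- `S = [1/β, 1/(β(β-1))]`. -/
def Sset (β : ℝ) : Set ℝ := Set.Icc (1 / β) (1 / (β * (β - 1)))

/-- `R = (1/(β(β-1)), 1/(β-1)]`. -/
def Rset (β : ℝ) : Set ℝ := Set.Ioc (1 / (β * (β - 1))) (1 / (β - 1))

/-- The digit produced at the point `x` when the coin shows `a`: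
`0` on `L`, `a` on `S`, `1` on `R`. -/
def digitB (β x : ℝ) (a : Bool) : Bool :=
  if x < 1 / β then false else if x ≤ 1 / (β * (β - 1)) then a else true

/-- One step of the random β-transformation on the second coordinate:
`T₀ x = βx` on `L`, `T_a x` on `S`, `T₁ x = βx - 1` on `R`. -/
def rStep (β x : ℝ) (a : Bool) : ℝ := β * x - (if digitB β x a then 1 else 0)

/-- The random β-transformation in skew-product form. -/
def Rmap (β : ℝ) (p : (ℕ → Bool) × ℝ) : (ℕ → Bool) × ℝ :=
  (shift p.1, rStep β p.2 (p.1 0))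

/-- The random β-transformation `K_β` (shifting `ω` only on `S`). -/
def Kmap (β : ℝ) (p : (ℕ → Bool) × ℝ) : (ℕ → Bool) × ℝ :=
  if p.2 < 1 / β then (p.1, β * p.2)
  else if p.2 ≤ 1 / (β * (β - 1)) then (shift p.1, β * p.2 - (if p.1 0 then 1 else 0))
  else (p.1, β * p.2 - 1)

/-- `R^n_{β,w}(x)`: the second coordinate of `R_β^n (ω, x)` for any `ω` starting with `w`. -/
def rItin (β x : ℝ) (w : List Bool) : ℝ := w.foldl (rStep β) x

/-- `r(w) = R^n_{β,w}(1)`. -/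
def rW (β : ℝ) (w : List Bool) : ℝ := rItin β 1 w

/-- The (unnormalised) density `ρ*_β`. -/
def rhoStar (β x : ℝ) : ℝ :=
  ∑' n : ℕ, ((2 * β) ^ n)⁻¹ * ∑ w : Fin n → Bool,
    ((Set.Icc (0 : ℝ) (rW β (List.ofFn w))).indicator 1 x
      + (Set.Icc (rItin β (1 / (β - 1) - 1) (List.ofFn w)) (1 / (β - 1))).indicator 1 x)

/-- `m` is the `(1/2, 1/2)` Bernoulli measure on `{0,1}^ℕ`. -/
def IsBernoulliHalf (m : Measure (ℕ → Bool)) : Prop :=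
  IsProbabilityMeasure m ∧
    ∀ (n : ℕ) (w : Fin n → Bool), m {ω | ∀ i : Fin n, ω i = w i} = (2 : ℝ≥0∞)⁻¹ ^ n

/-- The probability measure `μ_β` on `I_β` with density `ρ*_β / ∫ ρ*_β` w.r.t. Lebesgue. -/
def muBeta (β : ℝ) : Measure ℝ :=
  (volume.restrict (Ibeta β)).withDensity
    (fun x => ENNReal.ofReal (rhoStar β x / ∫ y in Ibeta β, rhoStar β y))

/-- `l(w) = Σ ωᵢ 2^(i-1)`. -/
def lVal : List Bool → ℕ
  | [] => 0
  | a :: t => (if a then 1 else 0) + 2 * lVal t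

/-- `v(w) = Σ_{k<n} β^(-k) + l(w)/(2β)^n`. -/
def vVal (β : ℝ) (w : List Bool) : ℝ :=
  (∑ k ∈ Finset.range w.length, ((β : ℝ) ^ k)⁻¹) + (lVal w : ℝ) / (2 * β) ^ w.length

/-- The sublevel `E_w = Ω × [0, r(w)] × [v(w), v(w) + (2β)^(-n))` of the tower. -/
def Eset (β : ℝ) (w : List Bool) : Set ((ℕ → Bool) × ℝ × ℝ) :=
  {p | p.2.1 ∈ Set.Icc 0 (rW β w) ∧
    p.2.2 ∈ Set.Ico (vVal β w) (vVal β w + ((2 * β) ^ w.length)⁻¹)}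

/-- The tower `E`. -/
def Etower (β : ℝ) : Set ((ℕ → Bool) × ℝ × ℝ) := ⋃ w : List Bool, Eset β w

/-- The step from `w` to `wa` is of type `T₁`. -/
def stepT1 (β : ℝ) (w : List Bool) (a : Bool) : Prop := digitB β (rW β w) a = true

/-- `C₁(wa) = v(wa) - v(w)/(2β)`. -/
def C1 (β : ℝ) (w : List Bool) (a : Bool) : ℝ := vVal β (w ++ [a]) - vVal β w / (2 * β)

/-- `C₂(wa) = 1/(2β) + Σ (2β)^(-(m+1)) - v(w)/(2β)`, summing over pairs `(u, b)` with
the step `u → ub` of type `T₁` and `v(u) < v(w)`. -/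
def C2 (β : ℝ) (w : List Bool) : ℝ :=
  (2 * β)⁻¹ +
    (∑' u : {q : List Bool × Bool // stepT1 β q.1 q.2 ∧ vVal β q.1 < vVal β w},
      ((2 * β) ^ (u.1.1.length + 1))⁻¹) - vVal β w / (2 * β)

/-- The action of `ψ` on points of the sublevel `E_w`. -/
def psiAux (β : ℝ) (w : List Bool) (p : (ℕ → Bool) × ℝ × ℝ) : (ℕ → Bool) × ℝ × ℝ :=
  if digitB β (rW β w) (p.1 0) then
    if p.2.1 < 1 / β then (shift p.1, β * p.2.1, p.2.2 / (2 * β) + C2 β w)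
    else (shift p.1, β * p.2.1 - 1, p.2.2 / (2 * β) + C1 β w (p.1 0))
  else (shift p.1, β * p.2.1, p.2.2 / (2 * β) + C1 β w (p.1 0))

/-- The tower map `ψ : E → E` (the identity off the tower). -/
def psi (β : ℝ) (p : (ℕ → Bool) × ℝ × ℝ) : (ℕ → Bool) × ℝ × ℝ :=
  if h : ∃ w : List Bool, p ∈ Eset β w then psiAux β h.choose p else p

/-- The reflection `P(ω, x, y) = (ω̄, 1/(β-1) - x, -y)`. -/
def Pmap (β : ℝ) (p : (ℕ → Bool) × ℝ × ℝ) : (ℕ → Bool) × ℝ × ℝ :=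
  (compSeq p.1, 1 / (β - 1) - p.2.1, -p.2.2)

/-- The reflected tower `Ē = P(E)`. -/
def Ebar (β : ℝ) : Set ((ℕ → Bool) × ℝ × ℝ) := Pmap β '' Etower β

/-- The exceptional set `F_w ⊆ E_w` (empty unless `r(w) ∈ R`). -/
def Fset (β : ℝ) (w : List Bool) : Set ((ℕ → Bool) × ℝ × ℝ) :=
  {p | p ∈ Eset β w ∧ p.1 0 = false ∧ p.2.1 ∈ Sset β ∧ rW β w ∈ Rset β}

/-- The swap map `Q` interchanging `ψ(F_w)` with `ψ(F̄_w̄) = P(ψ(F_w))`. -/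
def Qmap (β : ℝ) (p : (ℕ → Bool) × ℝ × ℝ) : (ℕ → Bool) × ℝ × ℝ :=
  if ∃ w : List Bool, p ∈ psi β '' Fset β w then (p.1, p.2.1 + 1, -p.2.2)
  else if ∃ w : List Bool, p ∈ Pmap β '' (psi β '' Fset β w) then (p.1, p.2.1 - 1, -p.2.2)
  else p

/-- `ψ` extended to `E ∪ Ē`, acting by `P ∘ ψ ∘ P⁻¹` on `Ē`. -/
def psiFull (β : ℝ) (p : (ℕ → Bool) × ℝ × ℝ) : (ℕ → Bool) × ℝ × ℝ :=
  if p ∈ Etower β then psi β p else Pmap β (psi β (Pmap β p))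

/-- The corrected tower map `ψ̃ = Q ∘ ψ`. -/
def psiTilde (β : ℝ) : ((ℕ → Bool) × ℝ × ℝ) → ((ℕ → Bool) × ℝ × ℝ) :=
  Qmap β ∘ psiFull β

/-- `h(ω, x, n) = #{0 ≤ i ≤ n-1 : π₂(K_β^i(ω,x)) ∈ S}`. -/
def hCount (β : ℝ) (ω : ℕ → Bool) (x : ℝ) (n : ℕ) : ℕ :=
  ((Finset.range n).filter (fun i => ((Kmap β)^[i] (ω, x)).2 ∈ Sset β)).card

/-- `π_β(a) = Σ aᵢ β^(-(i+1))`. -/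
def piB (β : ℝ) (a : ℕ → Bool) : ℝ :=
  ∑' i : ℕ, (if a i then (1 : ℝ) else 0) * ((β : ℝ) ^ (i + 1))⁻¹

/-- `𝒩ₙ(x; β)`: the number of words of length `n` extendable to a β-expansion of `x`. -/
def Ncount (β x : ℝ) (n : ℕ) : ℕ :=
  {a : Fin n → Bool | ∃ b : ℕ → Bool, (∀ i : Fin n, b i = a i) ∧ x = piB β b}.ncard

end


section stmt12aux

variable {β : ℝ}

lemma lVal_lt (w : List Bool) : lVal w < 2 ^ w.length := by
  induction w with
  | nil => simp [lVal]
  | cons a t ih =>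
      simp only [lVal, List.length_cons, pow_succ]
      cases a <;> simp <;> omega

lemma lVal_inj : ∀ u w : List Bool, u.length = w.length → lVal u = lVal w → u = w
  | [], [], _, _ => rfl
  | [], _ :: _, hl, _ => by simp at hl
  | _ :: _, [], hl, _ => by simp at hl
  | a :: u, b :: w, hl, hv => by
      simp only [List.length_cons, Nat.add_right_cancel_iff] at hl
      simp only [lVal] at hv
      have hab : a = b := by cases a <;> cases b <;> simp at hv ⊢ <;> omega
      subst hab
      have huw : lVal u = lVal w := by cases a <;> simp at hv <;> omega
      rw [lVal_inj u w hl huw]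

lemma vVal_bounds (hβ : 1 < β) (w : List Bool) :
    (∑ k ∈ Finset.range w.length, ((β : ℝ) ^ k)⁻¹) ≤ vVal β w ∧
      vVal β w + ((2 * β) ^ w.length)⁻¹ ≤
        ∑ k ∈ Finset.range (w.length + 1), ((β : ℝ) ^ k)⁻¹ := by
  have hβ0 : (0:ℝ) < β := by linarith
  have hpow : (0:ℝ) < (2 * β) ^ w.length := by positivity
  constructor
  · have h0 : (0:ℝ) ≤ (lVal w : ℝ) / (2 * β) ^ w.length := by positivity
    unfold vVal; linarith
  · rw [Finset.sum_range_succ]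
    have hl : ((lVal w : ℝ) + 1) ≤ 2 ^ w.length := by
      have h : lVal w + 1 ≤ 2 ^ w.length := lVal_lt w
      exact_mod_cast h
    have key : (lVal w : ℝ) / (2 * β) ^ w.length + ((2 * β) ^ w.length)⁻¹
        ≤ ((β : ℝ) ^ w.length)⁻¹ := by
      have h1 : (lVal w : ℝ) / (2 * β) ^ w.length + ((2 * β) ^ w.length)⁻¹
          = ((lVal w : ℝ) + 1) / (2 * β) ^ w.length := by
        rw [inv_eq_one_div, ← add_div]
      rw [h1, mul_pow, div_le_iff₀ (by positivity)]
      have hbp : (0:ℝ) < β ^ w.length := by positivity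
      calc ((lVal w : ℝ) + 1) ≤ 2 ^ w.length := hl
        _ = (β ^ w.length)⁻¹ * (2 ^ w.length * β ^ w.length) := by field_simp
    unfold vVal; linarith

lemma vVal_nonneg (hβ : 1 < β) (w : List Bool) : 0 ≤ vVal β w := by
  have h := (vVal_bounds hβ w).1
  have h2 : (0:ℝ) ≤ ∑ k ∈ Finset.range w.length, ((β : ℝ) ^ k)⁻¹ := by
    apply Finset.sum_nonneg; intro i _
    have : (0:ℝ) < β := by linarith
    positivity
  linarith

lemma vVal_append_ge_one (hβ : 1 < β) (w : List Bool) (a : Bool) :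
    1 ≤ vVal β (w ++ [a]) := by
  have hβ0 : (0:ℝ) < β := by linarith
  have h1 : ((β : ℝ) ^ 0)⁻¹ ≤ ∑ k ∈ Finset.range (w ++ [a]).length, ((β : ℝ) ^ k)⁻¹ := by
    apply Finset.single_le_sum (f := fun k => ((β : ℝ) ^ k)⁻¹)
    · intro i _; positivity
    · simp
  have h2 : (0:ℝ) ≤ (lVal (w ++ [a]) : ℝ) / (2 * β) ^ (w ++ [a]).length := by positivity
  simp only [pow_zero, inv_one] at h1
  unfold vVal; linarith

lemma Eset_unique (hβ : 1 < β) {p : (ℕ → Bool) × ℝ × ℝ} {u w : List Bool}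
    (hu : p ∈ Eset β u) (hw : p ∈ Eset β w) : u = w := by
  have hβ0 : (0:ℝ) < β := by linarith
  have hyu := hu.2
  have hyw := hw.2
  have bu := vVal_bounds hβ u
  have bw := vVal_bounds hβ w
  have smono : ∀ {a b : ℕ}, a ≤ b →
      (∑ k ∈ Finset.range a, ((β : ℝ) ^ k)⁻¹) ≤ ∑ k ∈ Finset.range b, ((β : ℝ) ^ k)⁻¹ := by
    intro a b hab
    apply Finset.sum_le_sum_of_subset_of_nonneg (Finset.range_subset_range.2 hab)
    intro i _ _; positivity
  have hlen : u.length = w.length := by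
    by_contra hne
    rcases Nat.lt_or_ge u.length w.length with h | h
    · have hs := smono (show u.length + 1 ≤ w.length from h)
      have := hyu.1; have := hyu.2; have := hyw.1; have := hyw.2
      linarith [bu.2, bw.1]
    · have h2 : w.length < u.length := lt_of_le_of_ne h (fun hh => hne hh.symm)
      have hs := smono (show w.length + 1 ≤ u.length from h2)
      have := hyu.1; have := hyu.2; have := hyw.1; have := hyw.2
      linarith [bw.2, bu.1]
  apply lVal_inj u w hlen
  have hpow : (0:ℝ) < (2 * β) ^ w.length := by positivity
  have hvu : vVal β u = (∑ k ∈ Finset.range w.length, ((β : ℝ) ^ k)⁻¹)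
      + (lVal u : ℝ) / (2 * β) ^ w.length := by
    unfold vVal; rw [hlen]
  have hvw : vVal β w = (∑ k ∈ Finset.range w.length, ((β : ℝ) ^ k)⁻¹)
      + (lVal w : ℝ) / (2 * β) ^ w.length := rfl
  have hpu : ((2 * β) ^ u.length : ℝ)⁻¹ = ((2 * β) ^ w.length)⁻¹ := by rw [hlen]
  have e1 : vVal β u < vVal β w + ((2 * β) ^ w.length)⁻¹ := by
    have h1 := hyu.1; have h2 := hyw.2; linarith
  have e2 : vVal β w < vVal β u + ((2 * β) ^ w.length)⁻¹ := by
    have h1 := hyw.1; have h2 := hyu.2; rw [hpu] at h2; linarith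
  rw [hvu, hvw] at e1 e2
  have hadd : ∀ m : ℕ, (m : ℝ) / (2 * β) ^ w.length + ((2 * β) ^ w.length)⁻¹
      = ((m : ℝ) + 1) / (2 * β) ^ w.length := by
    intro m; rw [inv_eq_one_div, ← add_div]
  have d1 : (lVal u : ℝ) / (2 * β) ^ w.length <
      (lVal w : ℝ) / (2 * β) ^ w.length + ((2 * β) ^ w.length)⁻¹ := by linarith
  have d2 : (lVal w : ℝ) / (2 * β) ^ w.length <
      (lVal u : ℝ) / (2 * β) ^ w.length + ((2 * β) ^ w.length)⁻¹ := by linarith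
  rw [hadd] at d1 d2
  have f1 := (div_lt_div_iff₀ hpow hpow).1 d1
  have f2 := (div_lt_div_iff₀ hpow hpow).1 d2
  have g1 : (lVal u : ℝ) < (lVal w : ℝ) + 1 := by nlinarith
  have g2 : (lVal w : ℝ) < (lVal u : ℝ) + 1 := by nlinarith
  have g1' : lVal u < lVal w + 1 := by exact_mod_cast g1
  have g2' : lVal w < lVal u + 1 := by exact_mod_cast g2
  omega

lemma digitB_of_R (hβ1 : 1 < β) (hβ2 : β < 2) {x : ℝ} (hx : x ∈ Rset β) (a : Bool) :
    digitB β x a = true := by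
  have hb1 : (0:ℝ) < β - 1 := by linarith
  have hβ0 : (0:ℝ) < β := by linarith
  have hlt : 1 / β ≤ 1 / (β * (β - 1)) := by
    rw [div_le_div_iff₀ hβ0 (by positivity)]
    nlinarith
  have h1 : ¬ x < 1 / β := not_lt.2 (le_trans hlt hx.1.le)
  have h2 : ¬ x ≤ 1 / (β * (β - 1)) := not_le.2 hx.1
  unfold digitB
  rw [if_neg h1, if_neg h2]

lemma psi_eval (hβ1 : 1 < β) (hβ2 : β < 2) {w : List Bool} {q : (ℕ → Bool) × ℝ × ℝ}
    (hq : q ∈ Fset β w) :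
    psi β q = (shift q.1, β * q.2.1 - 1, q.2.2 / (2 * β) + C1 β w false) := by
  obtain ⟨hqE, hq0, hqS, hwR⟩ := hq
  have h : ∃ u, q ∈ Eset β u := ⟨w, hqE⟩
  rw [psi, dif_pos h]
  have hcw : h.choose = w := Eset_unique hβ1 h.choose_spec hqE
  rw [hcw]
  unfold psiAux
  rw [if_pos (digitB_of_R hβ1 hβ2 hwR (q.1 0)), if_neg (not_lt.2 hqS.1), hq0]

lemma snd_ge_one_of_mem_psi_image (hβ1 : 1 < β) (hβ2 : β < 2) {u : List Bool}
    {p : (ℕ → Bool) × ℝ × ℝ} (hp : p ∈ psi β '' Fset β u) : 1 ≤ p.2.2 := by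
  obtain ⟨q, hq, rfl⟩ := hp
  have hqmem := hq
  rw [psi_eval hβ1 hβ2 hq]
  have h2β : (0:ℝ) < 2 * β := by linarith
  have hv : vVal β u ≤ q.2.2 := hqmem.1.2.1
  have hd : vVal β u / (2 * β) ≤ q.2.2 / (2 * β) := by gcongr
  have hc : C1 β u false = vVal β (u ++ [false]) - vVal β u / (2 * β) := rfl
  have h1 := vVal_append_ge_one hβ1 u false
  simp only [hc]
  linarith

/-- Explicit description of `ψ(F_w)` when `r(w) ∈ R`. -/
lemma mem_psi_image_Fset (hβ1 : 1 < β) (hβ2 : β < 2) {w : List Bool}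
    (hw : rW β w ∈ Rset β) (p : (ℕ → Bool) × ℝ × ℝ) :
    p ∈ psi β '' Fset β w ↔
      (0 ≤ p.2.1 ∧ p.2.1 ≤ (2 - β) / (β - 1)) ∧
      vVal β (w ++ [false]) ≤ p.2.2 ∧
        p.2.2 < vVal β (w ++ [false]) + ((2 * β) ^ (w.length + 1))⁻¹ := by
  have hβ0 : (0:ℝ) < β := by linarith
  have hb1 : (0:ℝ) < β - 1 := by linarith
  have h2β : (0:ℝ) < 2 * β := by linarith
  have hpow : (0:ℝ) < (2 * β) ^ w.length := by positivity
  have hc : C1 β w false = vVal β (w ++ [false]) - vVal β w / (2 * β) := rfl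
  have hinvs : (((2:ℝ) * β) ^ (w.length + 1))⁻¹ = ((2 * β) ^ w.length)⁻¹ / (2 * β) := by
    rw [pow_succ, mul_inv, div_eq_mul_inv]
  constructor
  · rintro ⟨q, hq, rfl⟩
    have hqmem := hq
    rw [psi_eval hβ1 hβ2 hq]
    obtain ⟨hqE, hq0, hqS, hwR⟩ := hqmem
    have hx1 : 1 / β ≤ q.2.1 := hqS.1
    have hx2 : q.2.1 ≤ 1 / (β * (β - 1)) := hqS.2
    have hxx1 : 1 ≤ β * q.2.1 := by
      rw [div_le_iff₀ hβ0] at hx1; linarith [hx1]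
    have hxx2 : β * q.2.1 * (β - 1) ≤ 1 := by
      rw [le_div_iff₀ (by positivity)] at hx2; nlinarith
    refine ⟨⟨by linarith, ?_⟩, ?_, ?_⟩
    · rw [le_div_iff₀ hb1]; nlinarith
    · have hv := hqE.2.1
      have hd : vVal β w / (2 * β) ≤ q.2.2 / (2 * β) := by gcongr
      simp only [hc]; linarith
    · have hv := hqE.2.2
      have hd : q.2.2 / (2 * β) < (vVal β w + ((2 * β) ^ w.length)⁻¹) / (2 * β) := by gcongr
      rw [add_div] at hd
      simp only [hc, hinvs]
      linarith
  · rintro ⟨⟨hx0, hxB⟩, hyA, hyA'⟩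
    refine ⟨(fun n => if n = 0 then false else p.1 (n - 1),
      (p.2.1 + 1) / β, (p.2.2 - C1 β w false) * (2 * β)), ?_, ?_⟩
    · have hxq1 : 1 / β ≤ (p.2.1 + 1) / β := by gcongr; linarith
      have hxq2 : (p.2.1 + 1) / β ≤ 1 / (β * (β - 1)) := by
        rw [div_le_div_iff₀ hβ0 (by positivity)]
        have hxb' : p.2.1 * (β - 1) ≤ 2 - β := by
          rw [le_div_iff₀ hb1] at hxB; linarith [hxB]
        nlinarith
      have hxq0 : 0 ≤ (p.2.1 + 1) / β := by positivity
      have hxqr : (p.2.1 + 1) / β ≤ rW β w := le_trans hxq2 hw.1.le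
      have hy1 : vVal β w ≤ (p.2.2 - C1 β w false) * (2 * β) := by
        have h1 : vVal β (w ++ [false]) - C1 β w false = vVal β w / (2 * β) := by
          rw [hc]; ring
        have h2 : vVal β w / (2 * β) * (2 * β) = vVal β w := by field_simp
        nlinarith [mul_le_mul_of_nonneg_right (show vVal β (w ++ [false]) - C1 β w false ≤ p.2.2 - C1 β w false by linarith) h2β.le]
      have hy2 : (p.2.2 - C1 β w false) * (2 * β) < vVal β w + ((2 * β) ^ w.length)⁻¹ := by
        have h1 : p.2.2 - C1 β w false < vVal β w / (2 * β) + ((2 * β) ^ w.length)⁻¹ / (2 * β) := by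
          rw [hc] at *; rw [hinvs] at hyA'; linarith
        have h2 : (vVal β w / (2 * β) + ((2 * β) ^ w.length)⁻¹ / (2 * β)) * (2 * β)
            = vVal β w + ((2 * β) ^ w.length)⁻¹ := by field_simp
        nlinarith [mul_lt_mul_of_pos_right h1 h2β]
      exact ⟨⟨⟨hxq0, hxqr⟩, hy1, hy2⟩, rfl, ⟨hxq1, hxq2⟩, hw⟩
    · rw [psi_eval hβ1 hβ2]
      · refine Prod.ext ?_ (Prod.ext ?_ ?_)
        · funext n; simp [shift]
        · show β * ((p.2.1 + 1) / β) - 1 = p.2.1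
          field_simp
          ring
        · show (p.2.2 - C1 β w false) * (2 * β) / (2 * β) + C1 β w false = p.2.2
          field_simp
          ring
      · -- membership in Fset again
        have hxq1 : 1 / β ≤ (p.2.1 + 1) / β := by gcongr; linarith
        have hxq2 : (p.2.1 + 1) / β ≤ 1 / (β * (β - 1)) := by
          rw [div_le_div_iff₀ hβ0 (by positivity)]
          have hxb' : p.2.1 * (β - 1) ≤ 2 - β := by
            rw [le_div_iff₀ hb1] at hxB; linarith [hxB]
          nlinarith
        have hxq0 : 0 ≤ (p.2.1 + 1) / β := by positivity
        have hxqr : (p.2.1 + 1) / β ≤ rW β w := le_trans hxq2 hw.1.le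
        have hy1 : vVal β w ≤ (p.2.2 - C1 β w false) * (2 * β) := by
          have h1 : vVal β (w ++ [false]) - C1 β w false = vVal β w / (2 * β) := by
            rw [hc]; ring
          have h2 : vVal β w / (2 * β) * (2 * β) = vVal β w := by field_simp
          nlinarith [mul_le_mul_of_nonneg_right (show vVal β (w ++ [false]) - C1 β w false ≤ p.2.2 - C1 β w false by linarith) h2β.le]
        have hy2 : (p.2.2 - C1 β w false) * (2 * β) < vVal β w + ((2 * β) ^ w.length)⁻¹ := by
          have h1 : p.2.2 - C1 β w false < vVal β w / (2 * β) + ((2 * β) ^ w.length)⁻¹ / (2 * β) := by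
            rw [hc] at *; rw [hinvs] at hyA'; linarith
          have h2 : (vVal β w / (2 * β) + ((2 * β) ^ w.length)⁻¹ / (2 * β)) * (2 * β)
              = vVal β w + ((2 * β) ^ w.length)⁻¹ := by field_simp
          nlinarith [mul_lt_mul_of_pos_right h1 h2β]
        exact ⟨⟨⟨hxq0, hxqr⟩, hy1, hy2⟩, rfl, ⟨hxq1, hxq2⟩, hw⟩

end stmt12aux

/-- for `r(w) ∈ R`, the swap map `Q` interchanges the images of the exceptional
sets of the two towers: `Q(ψ(F_w)) = ψ(F̄_w̄)` and `Q(ψ(F̄_w̄)) = ψ(F_w)`, where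
`ψ(F̄_w̄) = P(ψ(F_w))` since `ψ = P ∘ ψ ∘ P⁻¹` on `Ē`. -/
theorem stmt12 (β : ℝ) (hβ : 1 < β ∧ β < 2) (w : List Bool) (hw : rW β w ∈ Rset β) :
    Qmap β '' (psi β '' Fset β w) = Pmap β '' (psi β '' Fset β w) ∧
    Qmap β '' (Pmap β '' (psi β '' Fset β w)) = psi β '' Fset β w := by
  obtain ⟨hβ1, hβ2⟩ := hβ
  have hβ0 : (0:ℝ) < β := by linarith
  have hb1 : (0:ℝ) < β - 1 := by linarith
  have hA1 : 1 ≤ vVal β (w ++ [false]) := vVal_append_ge_one hβ1 w false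
  have hmem := mem_psi_image_Fset hβ1 hβ2 hw
  have hBval : 1 / (β - 1) - 1 = (2 - β) / (β - 1) := by field_simp; ring
  have hQ1 : ∀ p ∈ psi β '' Fset β w, Qmap β p = (p.1, p.2.1 + 1, -p.2.2) := by
    intro p hp
    rw [Qmap, if_pos ⟨w, hp⟩]
  have hQ2 : ∀ p ∈ Pmap β '' (psi β '' Fset β w), Qmap β p = (p.1, p.2.1 - 1, -p.2.2) := by
    intro p hp
    have hneg : ¬ ∃ u : List Bool, p ∈ psi β '' Fset β u := by
      rintro ⟨u, hu⟩
      have h1 := snd_ge_one_of_mem_psi_image hβ1 hβ2 hu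
      obtain ⟨q, hq, rfl⟩ := hp
      have h3 := ((hmem q).1 hq).2.1
      simp only [Pmap] at h1
      linarith
    rw [Qmap, if_neg hneg, if_pos ⟨w, hp⟩]
  constructor
  · ext p
    constructor
    · rintro ⟨q, hq, rfl⟩
      rw [hQ1 q hq]
      have h := (hmem q).1 hq
      refine ⟨(compSeq q.1, 1 / (β - 1) - (q.2.1 + 1), q.2.2), (hmem _).2 ?_, ?_⟩
      · exact ⟨⟨by simp only; linarith [h.1.1, h.1.2], by simp only; linarith [h.1.1, h.1.2]⟩,
          h.2.1, h.2.2⟩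
      · simp only [Pmap]
        refine Prod.ext_iff.2 ⟨?_, Prod.ext_iff.2 ⟨by simp only; ring, rfl⟩⟩
        funext n; simp [compSeq]
    · rintro ⟨q, hq, rfl⟩
      have h := (hmem q).1 hq
      have hq' : (compSeq q.1, 1 / (β - 1) - q.2.1 - 1, q.2.2) ∈ psi β '' Fset β w := by
        refine (hmem _).2 ⟨⟨by simp only; linarith [h.1.1, h.1.2],
          by simp only; linarith [h.1.1, h.1.2]⟩, h.2.1, h.2.2⟩
      refine ⟨_, hq', ?_⟩
      rw [hQ1 _ hq']
      simp only [Pmap]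
      exact Prod.ext_iff.2 ⟨rfl, Prod.ext_iff.2 ⟨by simp only; ring, rfl⟩⟩
  · ext p
    constructor
    · rintro ⟨q, hq, rfl⟩
      rw [hQ2 q hq]
      obtain ⟨q0, hq0, rfl⟩ := hq
      have h := (hmem q0).1 hq0
      refine (hmem _).2 ⟨⟨?_, ?_⟩, ?_, ?_⟩
      · simp only [Pmap]; linarith [h.1.1, h.1.2]
      · simp only [Pmap]; linarith [h.1.1, h.1.2]
      · simp only [Pmap, neg_neg]; exact h.2.1
      · simp only [Pmap, neg_neg]; exact h.2.2
    · intro hp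
      have h := (hmem p).1 hp
      have hq' : (compSeq p.1, 1 / (β - 1) - p.2.1 - 1, p.2.2) ∈ psi β '' Fset β w := by
        refine (hmem _).2 ⟨⟨by simp only; linarith [h.1.1, h.1.2],
          by simp only; linarith [h.1.1, h.1.2]⟩, h.2.1, h.2.2⟩
      have hPq' : Pmap β (compSeq p.1, 1 / (β - 1) - p.2.1 - 1, p.2.2)
          = (p.1, p.2.1 + 1, -p.2.2) := by
        simp only [Pmap]
        refine Prod.ext_iff.2 ⟨?_, Prod.ext_iff.2 ⟨by simp only; ring, rfl⟩⟩
        funext n; simp [compSeq]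
      have hqmem : (p.1, p.2.1 + 1, -p.2.2) ∈ Pmap β '' (psi β '' Fset β w) :=
        ⟨_, hq', hPq'⟩
      refine ⟨_, hqmem, ?_⟩
      rw [hQ2 _ hqmem]
      exact Prod.ext_iff.2 ⟨rfl, Prod.ext_iff.2 ⟨by simp only; ring, by simp⟩⟩

end RandomBeta
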